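/- Let σ be a smooth toric monoid, M an integral subspace of N_σ⊗ℝ, μ = σ ∩ M, and Λ the set of maximal faces of σ meeting μ trivially. Then σ = ⋃_{τ∈Λ} μ∗τ, where μ∗τ = σ ∩ (supp(μ) + supp(τ)) is the join. -/

import Mathlib

open scoped NNReal

namespace Toric

/-- The lattice `ℤ^n`. -/
abbrev L (n : ℕ) := Fin n → ℤ

/-- Inclusion of the lattice into the real vector space. -/
def toReal {n : ℕ} (v : L n) : Fin n → ℝ := fun i => (v i : ℝ)

lemma toReal_zero {n : ℕ} : toReal (0 : L n) = 0 := by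
  funext i; simp [toReal]

lemma toReal_add {n : ℕ} (v w : L n) : toReal (v + w) = toReal v + toReal w := by
  funext i; simp [toReal]

/-- The support of a monoid of lattice points: its non-negative real span,
viewed as a convex cone (an `ℝ≥0`-submodule). -/
noncomputable def supp {n : ℕ} (σ : AddSubmonoid (L n)) : Submodule ℝ≥0 (Fin n → ℝ) :=
  Submodule.span ℝ≥0 (toReal '' (σ : Set (L n)))

/-- A toric monoid: a finitely generated, sharp, saturated submonoid of the
lattice `ℤ^n` (integrality and torsion-freeness are automatic for submonoids
of a lattice). -/
structure IsToric {n : ℕ} (σ : AddSubmonoid (L n)) : Prop where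
  fg : σ.FG
  sharp : ∀ v ∈ σ, -v ∈ σ → v = 0
  saturated : ∀ v ∈ AddSubgroup.closure (σ : Set (L n)), ∀ k : ℕ, 0 < k → k • v ∈ σ → v ∈ σ

/-- `τ` is a face of `σ`: a submonoid such that `v + w ∈ τ` with `v, w ∈ σ`
implies `v, w ∈ τ`. -/
def IsFace {n : ℕ} (τ σ : AddSubmonoid (L n)) : Prop :=
  τ ≤ σ ∧ ∀ v w : L n, v ∈ σ → w ∈ σ → v + w ∈ τ → v ∈ τ ∧ w ∈ τ

/-- A refinement of the monoid `σ`: a collection of submonoids of `σ`, closed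
under passing to faces, such that the intersection of any two members is a
face of both, and whose supports cover the support of `σ`. -/
def IsRefinement {n : ℕ} (R : Set (AddSubmonoid (L n))) (σ : AddSubmonoid (L n)) : Prop :=
  (∀ σ' ∈ R, σ' ≤ σ) ∧
  (∀ σ' ∈ R, ∀ τ, IsFace τ σ' → τ ∈ R) ∧
  (∀ σ₁ ∈ R, ∀ σ₂ ∈ R, IsFace (σ₁ ⊓ σ₂) σ₁ ∧ IsFace (σ₁ ⊓ σ₂) σ₂) ∧
  (⋃ σ' ∈ R, (supp σ' : Set (Fin n → ℝ))) = (supp σ : Set (Fin n → ℝ))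

/-- A smooth (toric) monoid: freely generated by finitely many linearly
independent lattice vectors. -/
def IsSmooth {n : ℕ} (σ : AddSubmonoid (L n)) : Prop :=
  ∃ (k : ℕ) (b : Fin k → L n), LinearIndependent ℤ b ∧
    σ = AddSubmonoid.closure (Set.range b)

end Toric

namespace Toric

/-- The submonoid `σ ∩ M` of lattice points of `σ` lying in a real subspace `M`. -/
def interSubspace {n : ℕ} (σ : AddSubmonoid (L n)) (M : Submodule ℝ (Fin n → ℝ)) :
    AddSubmonoid (L n) where
  carrier := {v | v ∈ σ ∧ toReal v ∈ M}
  zero_mem' := ⟨σ.zero_mem, by rw [toReal_zero]; exact M.zero_mem⟩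
  add_mem' := by
    rintro a b ⟨ha, ha'⟩ ⟨hb, hb'⟩
    exact ⟨σ.add_mem ha hb, by rw [toReal_add]; exact M.add_mem ha' hb'⟩

/-- An integral subspace: a real subspace spanned by lattice vectors. -/
def IsIntegralSubspace {n : ℕ} (M : Submodule ℝ (Fin n → ℝ)) : Prop :=
  ∃ S : Set (L n), M = Submodule.span ℝ (toReal '' S)

/-- `τ` is a maximal face of `σ` meeting `μ` trivially. -/
def IsMaxTrivFace {n : ℕ} (σ μ τ : AddSubmonoid (L n)) : Prop :=
  IsFace τ σ ∧ τ ⊓ μ = ⊥ ∧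
  ∀ τ', IsFace τ' σ → τ ≤ τ' → τ' ⊓ μ = ⊥ → τ' = τ

/-- The join `μ ∗ τ` of two submonoids of `σ`: the lattice points of `σ`
lying in the Minkowski sum `supp μ + supp τ` of the supports. -/
noncomputable def join {n : ℕ} (σ μ τ : AddSubmonoid (L n)) : AddSubmonoid (L n) where
  carrier := {v | v ∈ σ ∧ toReal v ∈ (supp μ ⊔ supp τ : Submodule ℝ≥0 (Fin n → ℝ))}
  zero_mem' := ⟨σ.zero_mem, by rw [toReal_zero]; exact Submodule.zero_mem _⟩
  add_mem' := by
    rintro a b ⟨ha, ha'⟩ ⟨hb, hb'⟩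
    exact ⟨σ.add_mem ha hb, by rw [toReal_add]; exact Submodule.add_mem _ ha' hb'⟩

end Toric

namespace Toric

section Aux

variable {n k : ℕ} {b : Fin k → L n}

lemma mem_supp_of_mem {τ : AddSubmonoid (L n)} {w : L n} (h : w ∈ τ) :
    toReal w ∈ supp τ := by
  unfold supp
  exact Submodule.subset_span (Set.mem_image_of_mem _ h)

lemma toReal_sum_nsmul (a : Fin k → ℕ) :
    toReal (∑ i, a i • b i) = ∑ i, (a i : ℝ) • toReal (b i) := by
  funext j
  simp only [toReal, Finset.sum_apply, Pi.smul_apply, smul_eq_mul, nsmul_eq_mul,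
    Pi.mul_apply, Pi.natCast_apply]
  push_cast
  ring

lemma mem_closure_image_iff (I : Set (Fin k)) (v : L n) :
    v ∈ AddSubmonoid.closure (b '' I) ↔
      ∃ a : Fin k → ℕ, (∀ i, a i ≠ 0 → i ∈ I) ∧ ∑ i, a i • b i = v := by
  constructor
  · intro hv
    induction hv using AddSubmonoid.closure_induction with
    | mem x hx =>
      obtain ⟨i, hi, rfl⟩ := hx
      refine ⟨Pi.single i 1, fun j hj => ?_, ?_⟩
      · rcases eq_or_ne j i with rfl | hji
        · exact hi
        · simp [Pi.single_eq_of_ne hji] at hj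
      · rw [Finset.sum_eq_single i]
        · simp
        · intro j _ hji; simp [Pi.single_eq_of_ne hji]
        · simp
    | zero => exact ⟨0, by simp, by simp⟩
    | add x y _ _ ihx ihy =>
      obtain ⟨ax, hax, hax'⟩ := ihx
      obtain ⟨ay, hay, hay'⟩ := ihy
      refine ⟨ax + ay, fun i hi => ?_, ?_⟩
      · rcases eq_or_ne (ax i) 0 with h0 | h0
        · exact hay i (by simpa [h0] using hi)
        · exact hax i h0
      · simp only [Pi.add_apply, add_smul, Finset.sum_add_distrib, hax', hay']
  · rintro ⟨a, ha, rfl⟩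
    refine AddSubmonoid.sum_mem _ fun i _ => ?_
    rcases eq_or_ne (a i) 0 with h0 | h0
    · simp only [h0, zero_nsmul]
      exact AddSubmonoid.zero_mem _
    · have hbi : b i ∈ AddSubmonoid.closure (b '' I) :=
        AddSubmonoid.subset_closure (Set.mem_image_of_mem b (ha i h0))
      exact nsmul_mem hbi _

lemma mem_closure_range_iff (v : L n) :
    v ∈ AddSubmonoid.closure (Set.range b) ↔ ∃ a : Fin k → ℕ, ∑ i, a i • b i = v := by
  rw [← Set.image_univ, mem_closure_image_iff]
  exact ⟨fun ⟨a, _, h⟩ => ⟨a, h⟩, fun ⟨a, h⟩ => ⟨a, fun _ _ => trivial, h⟩⟩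

lemma coords_unique (hb : LinearIndependent ℤ b) {a a' : Fin k → ℕ}
    (h : ∑ i, a i • b i = ∑ i, a' i • b i) : a = a' := by
  have h2 : ∑ i, ((a i : ℤ) - (a' i : ℤ)) • b i = 0 := by
    simp only [sub_smul, natCast_zsmul, Finset.sum_sub_distrib, h, sub_self]
  have h3 := linearIndependent_iff'.mp hb Finset.univ _ h2
  funext i
  have := h3 i (Finset.mem_univ i)
  omega

lemma isFace_closure_image (hb : LinearIndependent ℤ b) (I : Set (Fin k)) :
    IsFace (AddSubmonoid.closure (b '' I)) (AddSubmonoid.closure (Set.range b)) := by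
  constructor
  · exact AddSubmonoid.closure_mono (by rintro x ⟨i, _, rfl⟩; exact ⟨i, rfl⟩)
  · intro v w hv hw hvw
    obtain ⟨av, hav⟩ := (mem_closure_range_iff v).mp hv
    obtain ⟨aw, haw⟩ := (mem_closure_range_iff w).mp hw
    obtain ⟨a, ha, hsum⟩ := (mem_closure_image_iff I _).mp hvw
    have key : av + aw = a := coords_unique hb (by
      simp only [Pi.add_apply, add_smul, Finset.sum_add_distrib, hav, haw, hsum])
    have hcoord : ∀ i, av i + aw i = a i := fun i => congrFun key i
    constructor
    · exact (mem_closure_image_iff I v).mpr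
        ⟨av, fun i hi => ha i (by have := hcoord i; omega), hav⟩
    · exact (mem_closure_image_iff I w).mpr
        ⟨aw, fun i hi => ha i (by have := hcoord i; omega), haw⟩

lemma basis_mem_of_coord_ne {τ : AddSubmonoid (L n)}
    (hτ : IsFace τ (AddSubmonoid.closure (Set.range b)))
    {v : L n} (hv : v ∈ τ) {a : Fin k → ℕ} (hav : ∑ i, a i • b i = v)
    {i : Fin k} (hi : a i ≠ 0) : b i ∈ τ := by
  have hsplit : v = b i + ∑ j, (Function.update a i (a i - 1)) j • b j := by
    rw [← hav]
    have haeq : a = Function.update a i (a i - 1) + Pi.single i 1 := by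
      funext j
      rcases eq_or_ne j i with rfl | hji
      · simp only [Pi.add_apply, Function.update_self, Pi.single_eq_same]; omega
      · simp [Function.update_of_ne hji, Pi.single_eq_of_ne hji]
    conv_lhs => rw [haeq]
    simp only [Pi.add_apply, add_smul, Finset.sum_add_distrib]
    rw [add_comm]
    congr 1
    rw [Finset.sum_eq_single i]
    · simp
    · intro j _ hji; simp [Pi.single_eq_of_ne hji]
    · simp
  have hrest : (∑ j, (Function.update a i (a i - 1)) j • b j) ∈
      AddSubmonoid.closure (Set.range b) :=
    (mem_closure_range_iff _).mpr ⟨_, rfl⟩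
  exact (hτ.2 (b i) _ (AddSubmonoid.subset_closure ⟨i, rfl⟩) hrest (hsplit ▸ hv)).1

lemma face_eq {τ : AddSubmonoid (L n)}
    (hτ : IsFace τ (AddSubmonoid.closure (Set.range b))) :
    τ = AddSubmonoid.closure (b '' {i | b i ∈ τ}) := by
  apply le_antisymm
  · intro v hv
    obtain ⟨a, hav⟩ := (mem_closure_range_iff v).mp (hτ.1 hv)
    exact (mem_closure_image_iff _ v).mpr
      ⟨a, fun i hi => basis_mem_of_coord_ne hτ hv hav hi, hav⟩
  · rw [AddSubmonoid.closure_le]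
    rintro x ⟨i, hi, rfl⟩
    exact hi

lemma key_lemma (b : Fin k → L n) (μ : AddSubmonoid (L n)) :
    ∀ N : ℕ, ∀ d : Fin k → ℝ, (∀ i, 0 ≤ d i) → {i | d i ≠ 0}.ncard ≤ N →
    ∃ c e : Fin k → ℝ, (∀ i, 0 ≤ c i) ∧ (∀ i, 0 ≤ e i) ∧ (∀ i, c i + e i = d i) ∧
      (∑ i, c i • toReal (b i)) ∈ supp μ ∧
      ∀ w ∈ μ, w ∈ AddSubmonoid.closure (b '' {i | e i ≠ 0}) → w = 0 := by
  intro N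
  induction N with
  | zero =>
    intro d hd hcard
    have hde : {i | d i ≠ 0} = ∅ := by
      rw [← Set.ncard_eq_zero (Set.toFinite _)] at *
      omega
    refine ⟨0, d, fun i => le_rfl, hd, fun i => zero_add _, by simp, fun w _ hw => ?_⟩
    rw [hde, Set.image_empty, AddSubmonoid.closure_empty] at hw
    exact AddSubmonoid.mem_bot.mp hw
  | succ N ih =>
    intro d hd hcard
    by_cases h : ∀ w ∈ μ, w ∈ AddSubmonoid.closure (b '' {i | d i ≠ 0}) → w = 0
    · exact ⟨0, d, fun i => le_rfl, hd, fun i => zero_add _, by simp, h⟩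
    · push_neg at h
      obtain ⟨w, hwμ, hwf, hw0⟩ := h
      obtain ⟨a, ha, haw⟩ := (mem_closure_image_iff _ w).mp hwf
      classical
      have hT : (Finset.univ.filter fun i => a i ≠ 0).Nonempty := by
        by_contra hc
        apply hw0
        rw [← haw]
        have hz : ∀ i, a i = 0 := by
          intro i
          by_contra hai
          exact hc ⟨i, Finset.mem_filter.mpr ⟨Finset.mem_univ i, hai⟩⟩
        simp [hz]
      set T := Finset.univ.filter fun i => a i ≠ 0 with hTdef
      have haT : ∀ i ∈ T, a i ≠ 0 := fun i hi => (Finset.mem_filter.mp hi).2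
      have hTpos : ∀ i ∈ T, 0 < d i / a i := by
        intro i hi
        have hai : a i ≠ 0 := haT i hi
        have hdi : d i ≠ 0 := ha i hai
        exact div_pos ((hd i).lt_of_ne (Ne.symm hdi))
          (Nat.cast_pos.mpr (Nat.pos_of_ne_zero hai))
      set ε := T.inf' hT fun i => d i / a i with hεdef
      have hε : 0 < ε := (Finset.lt_inf'_iff hT).mpr hTpos
      obtain ⟨i₀, hi₀T, hi₀⟩ := Finset.exists_mem_eq_inf' hT fun i => d i / a i
      have hεle : ∀ i, a i ≠ 0 → ε * a i ≤ d i := by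
        intro i hai
        have h1 : ε ≤ d i / a i :=
          Finset.inf'_le _ (Finset.mem_filter.mpr ⟨Finset.mem_univ i, hai⟩)
        have h2 : (0 : ℝ) < a i := Nat.cast_pos.mpr (Nat.pos_of_ne_zero hai)
        calc ε * a i ≤ (d i / a i) * a i := by nlinarith
          _ = d i := div_mul_cancel₀ _ (ne_of_gt h2)
      set d' := fun i => d i - ε * a i with hd'def
      have hd' : ∀ i, 0 ≤ d' i := by
        intro i
        rcases eq_or_ne (a i) 0 with h0 | h0
        · simp [hd'def, h0, hd i]
        · have := hεle i h0
          simp only [hd'def]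
          linarith
      have hd'i₀ : d' i₀ = 0 := by
        have hai₀ : a i₀ ≠ 0 := haT i₀ hi₀T
        have h2 : (0 : ℝ) < a i₀ := Nat.cast_pos.mpr (Nat.pos_of_ne_zero hai₀)
        simp only [hd'def, hεdef, hi₀]
        rw [div_mul_cancel₀ _ (ne_of_gt h2)]
        ring
      have hsub : {i | d' i ≠ 0} ⊆ {i | d i ≠ 0} \ {i₀} := by
        intro i hi
        refine ⟨?_, ?_⟩
        · intro hdi
          apply hi
          have hai : a i = 0 := by
            by_contra hai
            exact (ha i hai) hdi
          simp [hd'def, hai, hdi]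
        · intro hii₀
          rw [Set.mem_singleton_iff] at hii₀
          exact hi (hii₀ ▸ hd'i₀)
      have hcard' : {i | d' i ≠ 0}.ncard ≤ N := by
        have h1 := Set.ncard_le_ncard hsub (Set.toFinite _)
        have hi₀mem : i₀ ∈ {i | d i ≠ 0} := ha i₀ (haT i₀ hi₀T)
        have h2 : ({i | d i ≠ 0} \ {i₀}).ncard = {i | d i ≠ 0}.ncard - 1 :=
          Set.ncard_diff_singleton_of_mem hi₀mem
        have h3 : 0 < {i | d i ≠ 0}.ncard :=
          (Set.ncard_pos (Set.toFinite _)).mpr ⟨i₀, hi₀mem⟩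
        omega
      obtain ⟨c, e, hc, he, hce, hφ, htriv⟩ := ih d' hd' hcard'
      refine ⟨fun i => c i + ε * a i, e, ?_, he, ?_, ?_, htriv⟩
      · intro i
        exact add_nonneg (hc i) (mul_nonneg hε.le (Nat.cast_nonneg _))
      · intro i
        have h1 := hce i
        simp only [hd'def] at h1
        show c i + ε * (a i : ℝ) + e i = d i
        linarith
      · have heq : (∑ i, (c i + ε * a i) • toReal (b i)) =
            (∑ i, c i • toReal (b i)) + ε • toReal w := by
          rw [← haw, toReal_sum_nsmul, Finset.smul_sum, ← Finset.sum_add_distrib]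
          refine Finset.sum_congr rfl fun i _ => ?_
          rw [add_smul, smul_smul]
        rw [heq]
        refine Submodule.add_mem _ hφ ?_
        have hw : toReal w ∈ supp μ := mem_supp_of_mem hwμ
        have hs : ε • toReal w = (⟨ε, hε.le⟩ : ℝ≥0) • toReal w := by
          simp [NNReal.smul_def]
        rw [hs]
        exact Submodule.smul_mem _ _ hw

end Aux

/-- For a smooth toric monoid `σ` and `μ = σ ∩ M` the
intersection with an integral subspace, `σ` is the union of the joins
`μ ∗ τ` over the maximal faces `τ` of `σ` meeting `μ` trivially. -/
theorem planar_cover {n : ℕ} (σ : AddSubmonoid (L n))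
    (M : Submodule ℝ (Fin n → ℝ)) (hσ : IsToric σ) (hsm : IsSmooth σ)
    (hM : IsIntegralSubspace M) :
    ∀ v : L n, v ∈ σ ↔
      ∃ τ, IsMaxTrivFace σ (interSubspace σ M) τ ∧
        v ∈ join σ (interSubspace σ M) τ := by
  classical
  obtain ⟨k, b, hb, rfl⟩ := hsm
  set μ := interSubspace (AddSubmonoid.closure (Set.range b)) M with hμdef
  intro v
  constructor
  · intro hv
    obtain ⟨a, hav⟩ := (mem_closure_range_iff v).mp hv
    obtain ⟨c, e, hc, he, hce, hφ, htriv⟩ := key_lemma b μ k (fun i => (a i : ℝ))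
      (fun i => Nat.cast_nonneg _)
      (le_trans (Set.ncard_le_ncard (Set.subset_univ _) Set.finite_univ)
        (by rw [Set.ncard_univ]; simp [Nat.card_eq_fintype_card]))
    set S : Set (Finset (Fin k)) :=
      {J | {i | e i ≠ 0} ⊆ ↑J ∧ ∀ w ∈ μ, w ∈ AddSubmonoid.closure (b '' ↑J) → w = 0}
      with hSdef
    have hS0 : {i | e i ≠ 0}.toFinset ∈ S := by
      constructor
      · rw [Set.coe_toFinset]
      · rw [Set.coe_toFinset]; exact htriv
    obtain ⟨J, hJS, hJmax⟩ :=
      Set.Finite.exists_maximalFor Finset.card S (Set.toFinite S) ⟨_, hS0⟩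
    refine ⟨AddSubmonoid.closure (b '' ↑J), ⟨isFace_closure_image hb _, ?_, ?_⟩, hv, ?_⟩
    · rw [eq_bot_iff]
      intro w hw
      rw [AddSubmonoid.mem_inf] at hw
      rw [AddSubmonoid.mem_bot]
      exact hJS.2 w hw.2 hw.1
    · intro τ' hτ' hle htriv'
      have hτeq := face_eq hτ'
      set J' : Finset (Fin k) := Finset.univ.filter (fun i => b i ∈ τ') with hJ'def
      have hJ'coe : (↑J' : Set (Fin k)) = {i | b i ∈ τ'} := by
        ext i; simp [hJ'def]
      have hJJ' : J ⊆ J' := by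
        intro i hi
        simp only [hJ'def, Finset.mem_filter, Finset.mem_univ, true_and]
        exact hle (AddSubmonoid.subset_closure ⟨i, hi, rfl⟩)
      have hJ'S : J' ∈ S := by
        constructor
        · exact fun i hi => hJJ' (hJS.1 hi)
        · intro w hwμ hwτ'
          rw [hJ'coe, ← hτeq] at hwτ'
          have hmem : w ∈ τ' ⊓ μ := AddSubmonoid.mem_inf.mpr ⟨hwτ', hwμ⟩
          rw [htriv'] at hmem
          exact AddSubmonoid.mem_bot.mp hmem
      have hcardeq := hJmax hJ'S (Finset.card_le_card hJJ')
      have hJeq : J = J' := Finset.eq_of_subset_of_card_le hJJ' hcardeq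
      rw [hτeq, ← hJ'coe, ← hJeq]
    · have hmem : toReal v ∈ (supp μ ⊔
          supp (AddSubmonoid.closure (b '' (↑J : Set (Fin k)))) :
          Submodule ℝ≥0 (Fin n → ℝ)) := by
        rw [Submodule.mem_sup]
        refine ⟨∑ i, c i • toReal (b i), hφ, ∑ i, e i • toReal (b i), ?_, ?_⟩
        · refine Submodule.sum_mem _ fun i _ => ?_
          rcases eq_or_ne (e i) 0 with h0 | h0
          · simp [h0]
          · have hiJ : i ∈ (↑J : Set (Fin k)) := hJS.1 h0
            have hs : e i • toReal (b i) = (⟨e i, he i⟩ : ℝ≥0) • toReal (b i) := by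
              simp [NNReal.smul_def]
            rw [hs]
            exact Submodule.smul_mem _ _ (mem_supp_of_mem
              (AddSubmonoid.subset_closure (Set.mem_image_of_mem b hiJ)))
        · rw [← Finset.sum_add_distrib, ← hav, toReal_sum_nsmul]
          refine Finset.sum_congr rfl fun i _ => ?_
          rw [← add_smul, hce i]
      exact hmem
  · rintro ⟨τ, -, h⟩
    exact h.1

end Toric
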